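/- arXiv:1206.4285 — 3 statements merged into one kernel-verified Lean document; each statement's English description precedes it below -/
import Mathlib

section
/- Let (ξ_i) be i.i.d. N(0,1) and α ∈ (0,1/2). Set U(α) = -(α + log(1-2α)/2)/α and S_k = Σ_{i=1}^k (ξ_i² - 1) - U(α)·k, S_0 = 0. Then for every x > 0, P(sup_{k≥1} S_k > x) ≤ exp(-α x), and consequently E[sup_{k≥1} S_k]⁺ ≤ 1/α, i.e., E max_{k≥1} { Σ_{i=1}^k (ξ_i² - 1) - U(α)k } ≤ 1/α. -/
open MeasureTheory ProbabilityTheory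

set_option linter.unusedVariables false
set_option linter.unusedSectionVars false
open MeasureTheory ProbabilityTheory Real Set Filter
open scoped ENNReal NNReal

namespace Stmt7

noncomputable def g (α c t : ℝ) : ℝ := Real.exp (α * (t ^ 2 - c))

lemma g_meas (α c : ℝ) : Measurable (g α c) := by
  have : Measurable fun t : ℝ => α * (t ^ 2 - c) := by fun_prop
  exact Real.measurable_exp.comp this

lemma g_pos (α c t : ℝ) : 0 < g α c t := Real.exp_pos _

lemma pdf_eq (x : ℝ) : gaussianPDFReal 0 1 x = (Real.sqrt (2*π))⁻¹ * Real.exp (-(x^2/2)) := by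
  simp only [gaussianPDFReal, NNReal.coe_one, mul_one, sub_zero]
  rw [neg_div]

lemma gauss_int {α c : ℝ} (hα : 0 < α) (hα2 : α < 1/2)
    (hc : α * c = -(Real.log (1 - 2*α)) / 2) :
    Integrable (g α c) (gaussianReal 0 1) ∧ ∫ x, g α c x ∂(gaussianReal 0 1) = 1 := by
  have h12 : (0:ℝ) < 1 - 2*α := by linarith
  have hb : (0:ℝ) < 1/2 - α := by linarith
  have hfun : ∀ x : ℝ, gaussianPDFReal 0 1 x * g α c x
      = ((Real.sqrt (2*π))⁻¹ * Real.exp (-(α*c))) * Real.exp (-(1/2-α) * x^2) := by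
    intro x
    rw [pdf_eq, g, mul_assoc, ← Real.exp_add, mul_assoc, ← Real.exp_add]
    ring_nf
  have hgr : gaussianReal 0 1
      = volume.withDensity (fun x => ((gaussianPDFReal 0 1 x).toNNReal : ℝ≥0∞)) := by
    rw [gaussianReal_of_var_ne_zero 0 one_ne_zero]
    rfl
  have hmeasnn : Measurable fun x => (gaussianPDFReal 0 1 x).toNNReal :=
    (measurable_gaussianPDFReal 0 1).real_toNNReal
  have hint2 : Integrable (fun x => gaussianPDFReal 0 1 x * g α c x) volume := by
    rw [funext hfun]
    exact (integrable_exp_neg_mul_sq hb).const_mul _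
  constructor
  · rw [hgr, integrable_withDensity_iff hmeasnn.coe_nnreal_ennreal
      (ae_of_all _ fun x => ENNReal.coe_lt_top)]
    refine hint2.congr (ae_of_all _ fun x => ?_)
    simp only [ENNReal.coe_toReal, Real.coe_toNNReal _ (gaussianPDFReal_nonneg 0 1 x)]
    ring
  · rw [hgr, integral_withDensity_eq_integral_smul hmeasnn]
    have : ∀ x : ℝ, (gaussianPDFReal 0 1 x).toNNReal • g α c x
        = ((Real.sqrt (2*π))⁻¹ * Real.exp (-(α*c))) * Real.exp (-(1/2-α) * x^2) := by
      intro x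
      rw [NNReal.smul_def, Real.coe_toNNReal _ (gaussianPDFReal_nonneg 0 1 x), smul_eq_mul,
        hfun]
    rw [funext this, integral_const_mul, integral_gaussian]
    have hA : Real.exp (-(α*c)) = Real.sqrt (1 - 2*α) := by
      rw [Real.sqrt_eq_rpow, Real.rpow_def_of_pos h12, hc]
      congr 1
      ring
    rw [hA]
    rw [← Real.sqrt_inv, ← Real.sqrt_mul (by positivity), ← Real.sqrt_mul (by positivity)]
    rw [show ((2*π)⁻¹ * (1-2*α) * (π/(1/2-α))) = 1 by
      field_simp]
    exact Real.sqrt_one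


variable {Ω : Type*} [MeasurableSpace Ω] {P : Measure Ω} [IsProbabilityMeasure P]
  {ξ : ℕ → Ω → ℝ} {α c l : ℝ}

noncomputable def M (ξ : ℕ → Ω → ℝ) (α c : ℝ) (n : ℕ) (ω : Ω) : ℝ :=
  ∏ i ∈ Finset.range n, g α c (ξ i ω)

lemma M_meas (hmeas : ∀ i, Measurable (ξ i)) (n : ℕ) : Measurable (M ξ α c n) :=
  Finset.measurable_prod _ fun i _ => (g_meas α c).comp (hmeas i)

lemma M_pos (n : ℕ) (ω : Ω) : 0 < M ξ α c n ω := Finset.prod_pos fun i _ => g_pos _ _ _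

lemma M_zero (ω : Ω) : M ξ α c 0 ω = 1 := by simp [M]

lemma M_succ (n : ℕ) (ω : Ω) : M ξ α c (n+1) ω = M ξ α c n ω * g α c (ξ n ω) :=
  Finset.prod_range_succ _ _

lemma indep_aux (hmeas : ∀ i, Measurable (ξ i))
    (hindep : iIndepFun ξ P)
    (n : ℕ) (ψ : (ℕ → ℝ) → ℝ) (hψ : Measurable ψ) (φr : ℝ → ℝ) (hφr : Measurable φr)
    (hdep : ∀ u v : ℕ → ℝ, (∀ i < n, u i = v i) → ψ u = ψ v) :
    IndepFun (fun ω => ψ (fun i => ξ i ω)) (fun ω => φr (ξ n ω)) P := by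
  have h1 := hindep.indepFun_finset (Finset.range n) {n}
    (by simp [Finset.disjoint_left]; omega) hmeas
  have hΦm : Measurable fun v : (i : (Finset.range n : Finset ℕ)) → ℝ =>
      ψ (fun i => if h : i ∈ Finset.range n then v ⟨i, h⟩ else 0) := by
    refine hψ.comp (measurable_pi_lambda _ fun i => ?_)
    by_cases h : i ∈ Finset.range n
    · simpa only [dif_pos h] using measurable_pi_apply (⟨i, h⟩ : (Finset.range n : Finset ℕ))
    · simpa only [dif_neg h] using measurable_const
  have hΨm : Measurable fun v : (i : ({n} : Finset ℕ)) → ℝ =>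
      φr (v ⟨n, Finset.mem_singleton_self n⟩) :=
    hφr.comp (measurable_pi_apply _)
  have h2 := h1.comp hΦm hΨm
  convert h2 using 1
  funext ω
  exact hdep _ _ (fun i hi => by simp [Finset.mem_range.mpr hi])
  rfl

variable (hmeas : ∀ i, Measurable (ξ i))
  (hindep : iIndepFun ξ P)
  (hdist : ∀ i, Measure.map (ξ i) P = gaussianReal 0 1)
  (hgint : Integrable (g α c) (gaussianReal 0 1))
  (hgmom : ∫ x, g α c x ∂(gaussianReal 0 1) = 1)

include hmeas hdist hgint in
lemma Y_int (i : ℕ) : Integrable (fun ω => g α c (ξ i ω)) P := by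
  rw [← hdist i] at hgint
  exact (integrable_map_measure (g_meas α c).aestronglyMeasurable
    (hmeas i).aemeasurable).mp hgint

include hmeas hdist hgmom in
lemma Y_integral (i : ℕ) : ∫ ω, g α c (ξ i ω) ∂P = 1 := by
  rw [← hgmom, ← hdist i, integral_map (hmeas i).aemeasurable
    (g_meas α c).aestronglyMeasurable]

include hmeas hindep in
lemma M_indep_Y (n : ℕ) : IndepFun (M ξ α c n) (fun ω => g α c (ξ n ω)) P := by
  have := indep_aux hmeas hindep n (fun u => ∏ i ∈ Finset.range n, g α c (u i))
    (Finset.measurable_prod _ fun i _ => (g_meas α c).comp (measurable_pi_apply i))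
    (g α c) (g_meas α c)
    (fun u v h => Finset.prod_congr rfl fun i hi => by rw [h i (Finset.mem_range.mp hi)])
  exact this

include hmeas hindep hdist hgint hgmom in
lemma M_int (n : ℕ) : Integrable (M ξ α c n) P ∧ ∫ ω, M ξ α c n ω ∂P = 1 := by
  induction n with
  | zero =>
    constructor
    · exact (integrable_const 1).congr (ae_of_all _ fun ω => (M_zero ω).symm)
    · simp only [M_zero]; simp
  | succ n ih =>
    have hrw : M ξ α c (n+1) = fun ω => M ξ α c n ω * g α c (ξ n ω) :=
      funext fun ω => M_succ n ω
    rw [hrw]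
    refine ⟨(M_indep_Y hmeas hindep n).integrable_mul ih.1 (Y_int hmeas hdist hgint n), ?_⟩
    rw [show (fun ω => M ξ α c n ω * g α c (ξ n ω))
        = (M ξ α c n * fun ω => g α c (ξ n ω)) from rfl,
      (M_indep_Y hmeas hindep n).integral_mul_eq_mul_integral ih.1.aestronglyMeasurable
      (Y_int hmeas hdist hgint n).aestronglyMeasurable, ih.2, Y_integral hmeas hdist hgmom n, mul_one]

open Classical in
noncomputable def N (ξ : ℕ → Ω → ℝ) (α c l : ℝ) : ℕ → Ω → ℝ
  | 0 => fun _ => 1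
  | (n+1) => fun ω => if ∀ k ≤ n, M ξ α c k ω ≤ l then M ξ α c (n+1) ω else N ξ α c l n ω

open Classical in
lemma N_succ_def (n : ℕ) (ω : Ω) : N ξ α c l (n+1) ω
    = if ∀ k ≤ n, M ξ α c k ω ≤ l then M ξ α c (n+1) ω else N ξ α c l n ω := rfl

lemma N_nonneg (n : ℕ) (ω : Ω) : 0 ≤ N ξ α c l n ω := by
  induction n with
  | zero => exact zero_le_one
  | succ n ih =>
    rw [N_succ_def]
    split
    · exact (M_pos _ _).le
    · exact ih

lemma N_eq (n : ℕ) (ω : Ω) (h : ∀ k ≤ n, M ξ α c k ω ≤ l) : N ξ α c l n ω = M ξ α c n ω := by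
  cases n with
  | zero => exact (M_zero ω).symm
  | succ n => rw [N_succ_def, if_pos (fun k hk => h k (hk.trans (Nat.le_succ n)))]

lemma N_gt (hl : 1 ≤ l) (n : ℕ) (ω : Ω) (h : ∃ k, k ≤ n ∧ l < M ξ α c k ω) :
    l < N ξ α c l n ω := by
  induction n with
  | zero =>
    obtain ⟨k, hk, hlt⟩ := h
    interval_cases k
    rw [M_zero] at hlt
    exact absurd hl (by linarith)
  | succ n ih =>
    by_cases hc : ∀ k ≤ n, M ξ α c k ω ≤ l
    · obtain ⟨k, hk, hlt⟩ := h
      have hkeq : k = n + 1 := by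
        rcases Nat.lt_succ_iff_lt_or_eq.mp (Nat.lt_succ_of_le hk) with h' | h'
        · exact absurd (hc k (Nat.lt_succ_iff.mp h')) (not_le.mpr hlt)
        · exact h'
      rw [N_succ_def, if_pos hc, ← hkeq]
      exact hlt
    · push_neg at hc
      obtain ⟨k, hk, hlt⟩ := hc
      rw [N_succ_def, if_neg (by push_neg; exact ⟨k, hk, hlt⟩)]
      exact ih ⟨k, hk, hlt⟩

lemma N_succ_eq (n : ℕ) :
    N ξ α c l (n+1) = fun ω => N ξ α c l n ω +
      (Set.indicator {ω' | ∀ k ≤ n, M ξ α c k ω' ≤ l} (M ξ α c n) ω) *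
        (g α c (ξ n ω) - 1) := by
  funext ω
  by_cases h : ∀ k ≤ n, M ξ α c k ω ≤ l
  · rw [N_succ_def, if_pos h,
      Set.indicator_of_mem (show ω ∈ {ω' | ∀ k ≤ n, M ξ α c k ω' ≤ l} from h),
      N_eq n ω h, M_succ]
    ring
  · rw [N_succ_def, if_neg h,
      Set.indicator_of_notMem (show ω ∉ {ω' | ∀ k ≤ n, M ξ α c k ω' ≤ l} from h)]
    ring

include hmeas in
lemma cond_measurable (n : ℕ) : MeasurableSet {ω' : Ω | ∀ k ≤ n, M ξ α c k ω' ≤ l} := by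
  have : {ω' : Ω | ∀ k ≤ n, M ξ α c k ω' ≤ l}
      = ⋂ k, ⋂ (_ : k ≤ n), {ω' | M ξ α c k ω' ≤ l} := by ext ω; simp
  rw [this]
  exact MeasurableSet.iInter fun k => MeasurableSet.iInter fun _ =>
    measurableSet_le (M_meas hmeas k) measurable_const

include hmeas hindep in
lemma H_indep (n : ℕ) :
    IndepFun (fun ω => Set.indicator {ω' | ∀ k ≤ n, M ξ α c k ω' ≤ l} (M ξ α c n) ω)
      (fun ω => g α c (ξ n ω) - 1) P := by
  have hprodm : Measurable fun u : ℕ → ℝ => ∏ i ∈ Finset.range n, g α c (u i) :=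
    Finset.measurable_prod _ fun i _ => (g_meas α c).comp (measurable_pi_apply i)
  have hsetm : MeasurableSet {u : ℕ → ℝ | ∀ k ≤ n, (∏ i ∈ Finset.range k, g α c (u i)) ≤ l} := by
    have : {u : ℕ → ℝ | ∀ k ≤ n, (∏ i ∈ Finset.range k, g α c (u i)) ≤ l}
        = ⋂ k, ⋂ (_ : k ≤ n), {u | (∏ i ∈ Finset.range k, g α c (u i)) ≤ l} := by ext u; simp
    rw [this]
    exact MeasurableSet.iInter fun k => MeasurableSet.iInter fun _ =>
      measurableSet_le (Finset.measurable_prod _ fun i _ =>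
        (g_meas α c).comp (measurable_pi_apply i)) measurable_const
  have := indep_aux hmeas hindep n
    (fun u => Set.indicator {u' : ℕ → ℝ | ∀ k ≤ n, (∏ i ∈ Finset.range k, g α c (u' i)) ≤ l}
      (fun u' => ∏ i ∈ Finset.range n, g α c (u' i)) u)
    (hprodm.indicator hsetm)
    (fun x => g α c x - 1) ((g_meas α c).sub measurable_const)
    ?_
  · convert this using 1
    rfl
  · intro u v h
    have hprod : ∀ k ≤ n, (∏ i ∈ Finset.range k, g α c (u i))
        = ∏ i ∈ Finset.range k, g α c (v i) := fun k hk =>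
      Finset.prod_congr rfl fun i hi => by
        rw [h i (lt_of_lt_of_le (Finset.mem_range.mp hi) hk)]
    simp only [Set.indicator_apply, Set.mem_setOf_eq]
    refine if_congr ?_ (hprod n le_rfl) rfl
    constructor
    · intro H k hk; rw [← hprod k hk]; exact H k hk
    · intro H k hk; rw [hprod k hk]; exact H k hk

include hmeas hindep hdist hgint hgmom in
lemma N_int (n : ℕ) : Integrable (N ξ α c l n) P ∧ ∫ ω, N ξ α c l n ω ∂P = 1 := by
  induction n with
  | zero =>
    constructor
    · exact integrable_const 1
    · simp [N]
  | succ n ih =>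
    set H : Ω → ℝ := fun ω => Set.indicator {ω' | ∀ k ≤ n, M ξ α c k ω' ≤ l} (M ξ α c n) ω
      with hH
    set R : Ω → ℝ := fun ω => g α c (ξ n ω) - 1 with hR
    have hHmeas : Measurable H := (M_meas hmeas n).indicator (cond_measurable hmeas n)
    have hHint : Integrable H P := by
      exact (M_int hmeas hindep hdist hgint hgmom n).1.mono hHmeas.aestronglyMeasurable
        (ae_of_all _ fun ω => norm_indicator_le_norm_self _ _)
    have hRint : Integrable R P := (Y_int hmeas hdist hgint n).sub (integrable_const 1)
    have hR0 : ∫ ω, R ω ∂P = 0 := by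
      rw [hR]
      rw [integral_sub (Y_int hmeas hdist hgint n) (integrable_const 1)]
      simp [Y_integral hmeas hdist hgmom n]
    have hHR : IndepFun H R P := H_indep hmeas hindep n
    have hHRint : Integrable (fun ω => H ω * R ω) P := hHR.integrable_mul hHint hRint
    have hHRzero : ∫ ω, H ω * R ω ∂P = 0 := by
      rw [show (fun ω => H ω * R ω) = H * R from rfl,
        hHR.integral_mul_eq_mul_integral hHint.aestronglyMeasurable hRint.aestronglyMeasurable, hR0, mul_zero]
    rw [N_succ_eq]
    constructor
    · exact ih.1.add hHRint
    · rw [integral_add ih.1 hHRint, ih.2, hHRzero, add_zero]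

include hmeas hindep hdist hgint hgmom in
lemma maximal (hl : 1 ≤ l) (n : ℕ) :
    l * (P {ω | ∃ k, k ≤ n ∧ l < M ξ α c k ω}).toReal ≤ 1 := by
  set E : Set Ω := {ω | ∃ k, k ≤ n ∧ l < M ξ α c k ω} with hE
  have hEm : MeasurableSet E := by
    have : E = ⋃ k, ⋃ (_ : k ≤ n), {ω | l < M ξ α c k ω} := by ext ω; simp [hE]
    rw [this]
    exact MeasurableSet.iUnion fun k => MeasurableSet.iUnion fun _ =>
      measurableSet_lt measurable_const (M_meas hmeas k)
  have hpt : ∀ ω, Set.indicator E (fun _ => l) ω ≤ N ξ α c l n ω := by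
    intro ω
    by_cases h : ω ∈ E
    · rw [Set.indicator_of_mem h]
      exact (N_gt hl n ω h).le
    · rw [Set.indicator_of_notMem h]
      exact N_nonneg n ω
  have h1 : ∫ ω, Set.indicator E (fun _ => l) ω ∂P ≤ ∫ ω, N ξ α c l n ω ∂P :=
    integral_mono ((integrable_const l).indicator hEm)
      (N_int hmeas hindep hdist hgint hgmom n).1 hpt
  rw [integral_indicator_const _ hEm, (N_int hmeas hindep hdist hgint hgmom n).2] at h1
  rw [mul_comm]
  simpa [Measure.real] using h1

end Stmt7

namespace Stmt7

variable {Ω : Type*} [MeasurableSpace Ω] {P : Measure Ω} [IsProbabilityMeasure P]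
  {ξ : ℕ → Ω → ℝ} {α c l : ℝ}

noncomputable def S (ξ : ℕ → Ω → ℝ) (α : ℝ) (k : ℕ) (ω : Ω) : ℝ :=
  ∑ i ∈ Finset.range k, ((ξ i ω) ^ 2 - 1) - (-(α + Real.log (1 - 2 * α) / 2) / α) * (k : ℝ)

lemma S_meas (hmeas : ∀ i, Measurable (ξ i)) (α : ℝ) (k : ℕ) : Measurable (S ξ α k) := by
  unfold S
  have h1 : Measurable fun ω => ∑ i ∈ Finset.range k, ((ξ i ω) ^ 2 - 1) :=
    Finset.measurable_sum _ fun i _ => ((hmeas i).pow_const 2).sub measurable_const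
  exact h1.sub measurable_const

lemma M_eq_exp (hα : α ≠ 0) (hcdef : c = 1 + (-(α + Real.log (1 - 2 * α) / 2) / α))
    (k : ℕ) (ω : Ω) : M ξ α c k ω = Real.exp (α * S ξ α k ω) := by
  unfold M S g
  rw [← Real.exp_sum]
  congr 1
  have h1 : ∀ i ∈ Finset.range k, α * ((ξ i ω) ^ 2 - c)
      = α * ((ξ i ω) ^ 2 - 1) - α * (-(α + Real.log (1 - 2 * α) / 2) / α) := by
    intro i _; rw [hcdef]; ring
  rw [Finset.sum_congr rfl h1, Finset.sum_sub_distrib, Finset.sum_const, Finset.card_range,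
    ← Finset.mul_sum, nsmul_eq_mul]
  ring

variable (hmeas : ∀ i, Measurable (ξ i))
  (hindep : iIndepFun ξ P)
  (hdist : ∀ i, Measure.map (ξ i) P = gaussianReal 0 1)
  (hgint : Integrable (g α c) (gaussianReal 0 1))
  (hgmom : ∫ x, g α c x ∂(gaussianReal 0 1) = 1)

include hmeas hindep hdist hgint hgmom in
lemma part1 (hα : 0 < α) (hcdef : c = 1 + (-(α + Real.log (1 - 2 * α) / 2) / α))
    (x : ℝ) (hx : 0 < x) :
    (P {ω | x < ⨆ k : ℕ+, S ξ α (k : ℕ) ω}).toReal ≤ Real.exp (-α * x) := by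
  set l := Real.exp (α * x) with hl
  have hl1 : 1 < l := by
    rw [hl, show (1:ℝ) = Real.exp 0 by simp, Real.exp_lt_exp]
    positivity
  have hiff : ∀ (k : ℕ) (ω : Ω), l < M ξ α c k ω ↔ x < S ξ α k ω := by
    intro k ω
    rw [M_eq_exp hα.ne' hcdef, hl, Real.exp_lt_exp, mul_lt_mul_iff_right₀ hα]
  set E : ℕ → Set Ω := fun n => {ω | ∃ k, k ≤ n ∧ l < M ξ α c k ω} with hE
  have hmono : Monotone E := fun a b hab ω hω => by
    obtain ⟨k, hk, h⟩ := hω; exact ⟨k, hk.trans hab, h⟩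
  have hsub : {ω | x < ⨆ k : ℕ+, S ξ α (k : ℕ) ω} ⊆ ⋃ n, E n := by
    intro ω hω
    obtain ⟨k, hk⟩ := exists_lt_of_lt_ciSup (show x < ⨆ k : ℕ+, S ξ α (k : ℕ) ω from hω)
    exact Set.mem_iUnion.mpr ⟨(k : ℕ), ⟨(k : ℕ), le_rfl, (hiff _ ω).mpr hk⟩⟩
  have hEb : ∀ n, P (E n) ≤ ENNReal.ofReal (Real.exp (-α * x)) := by
    intro n
    have hmax := maximal hmeas hindep hdist hgint hgmom hl1.le n
    have hlpos : (0:ℝ) < l := lt_trans one_pos hl1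
    have ht : (P (E n)).toReal ≤ Real.exp (-α * x) := by
      have h2 : (P (E n)).toReal ≤ 1 / l := by
        rw [le_div_iff₀ hlpos]
        linarith [hmax]
      calc (P (E n)).toReal ≤ 1 / l := h2
        _ = Real.exp (-α * x) := by
          rw [one_div, hl, ← Real.exp_neg, neg_mul]
    exact (ENNReal.le_ofReal_iff_toReal_le (measure_ne_top P _) (Real.exp_nonneg _)).mpr ht
  have hchain : P {ω | x < ⨆ k : ℕ+, S ξ α (k : ℕ) ω} ≤ ENNReal.ofReal (Real.exp (-α * x)) := by
    calc P {ω | x < ⨆ k : ℕ+, S ξ α (k : ℕ) ω} ≤ P (⋃ n, E n) := measure_mono hsub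
      _ = ⨆ n, P (E n) := (hmono.directed_le).measure_iUnion
      _ ≤ ENNReal.ofReal (Real.exp (-α * x)) := iSup_le hEb
  have := ENNReal.toReal_mono ENNReal.ofReal_ne_top hchain
  rwa [ENNReal.toReal_ofReal (Real.exp_nonneg _)] at this

include hmeas hindep hdist hgint hgmom in
lemma part2 (hα : 0 < α) (hcdef : c = 1 + (-(α + Real.log (1 - 2 * α) / 2) / α)) :
    ∫ ω, (⨆ k : ℕ+, S ξ α (k : ℕ) ω) ∂P ≤ 1 / α := by
  set G : Ω → ℝ := fun ω => ⨆ k : ℕ+, S ξ α (k : ℕ) ω with hG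
  by_cases hInt : Integrable G P
  · have hGp : Integrable (fun ω => max (G ω) 0) P := hInt.pos_part
    have h1 : ∫ ω, G ω ∂P ≤ ∫ ω, max (G ω) 0 ∂P :=
      integral_mono hInt hGp fun ω => le_max_left _ _
    have h2 : ∫ ω, max (G ω) 0 ∂P
        = ∫ t in Set.Ioi (0:ℝ), (P {a | t < max (G a) 0}).toReal :=
      hGp.integral_eq_integral_meas_lt (ae_of_all _ fun ω => le_max_right _ _)
    have h3 : ∀ t : ℝ, 0 < t → (P {a | t < max (G a) 0}).toReal ≤ Real.exp (-α * t) := by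
      intro t ht
      have hset : {a | t < max (G a) 0} = {a | t < ⨆ k : ℕ+, S ξ α (k : ℕ) a} := by
        ext a
        simp only [Set.mem_setOf_eq, lt_max_iff, hG]
        constructor
        · rintro (h | h)
          · exact h
          · linarith
        · exact fun h => Or.inl h
      rw [hset]
      exact part1 hmeas hindep hdist hgint hgmom hα hcdef t ht
    have h4 : ∫ t in Set.Ioi (0:ℝ), (P {a | t < max (G a) 0}).toReal
        ≤ ∫ t in Set.Ioi (0:ℝ), Real.exp (-α * t) := by
      refine integral_mono_of_nonneg (ae_of_all _ fun t => ENNReal.toReal_nonneg)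
        (exp_neg_integrableOn_Ioi 0 hα) ?_
      exact (ae_restrict_iff' measurableSet_Ioi).mpr (ae_of_all _ fun t ht => h3 t ht)
    have h5 : ∫ t in Set.Ioi (0:ℝ), Real.exp (-α * t) = 1 / α := by
      have hderiv : ∀ y ∈ Set.Ici (0:ℝ),
          HasDerivAt (fun t => -Real.exp (-α * t) / α) (Real.exp (-α * y)) y := by
        intro y _
        have h := (((hasDerivAt_id y).const_mul (-α)).exp).neg.div_const α
        exact h.congr_deriv (by simp only [id, mul_one]; field_simp)
      have htend : Tendsto (fun t => -Real.exp (-α * t) / α) atTop (nhds 0) := by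
        have h0 : Tendsto (fun t : ℝ => -α * t) atTop atBot :=
          tendsto_id.const_mul_atTop_of_neg (neg_neg_iff_pos.mpr hα)
        have h2' := (Real.tendsto_exp_atBot.comp h0).neg.div_const α
        simpa using h2'
      have hval := integral_Ioi_of_hasDerivAt_of_tendsto' hderiv
        (exp_neg_integrableOn_Ioi 0 hα) htend
      rw [hval]
      norm_num
      ring
    calc ∫ ω, G ω ∂P ≤ ∫ ω, max (G ω) 0 ∂P := h1
      _ = ∫ t in Set.Ioi (0:ℝ), (P {a | t < max (G a) 0}).toReal := h2
      _ ≤ ∫ t in Set.Ioi (0:ℝ), Real.exp (-α * t) := h4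
      _ = 1 / α := h5
  · rw [integral_undef hInt]
    positivity

lemma iIndep_ae {ξ ξ' : ℕ → Ω → ℝ} (hindep : iIndepFun ξ P)
    (heq : ∀ i, ξ i =ᵐ[P] ξ' i) : iIndepFun ξ' P := by
  rw [ProbabilityTheory.iIndepFun_iff_measure_inter_preimage_eq_mul] at hindep ⊢
  intro S sets hsets
  have h1 : ∀ i : ℕ, (ξ' i ⁻¹' (sets i) : Set Ω) =ᵐ[P] (ξ i ⁻¹' (sets i)) := fun i =>
    Filter.eventuallyEq_set.mpr ((heq i).mono fun ω h => by
      simp only [Set.mem_preimage, h])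
  have hall : ∀ᵐ ω ∂P, ∀ i ∈ S, ξ i ω = ξ' i ω :=
    (ae_ball_iff S.countable_toSet).mpr fun i _ => heq i
  have h2 : ((⋂ i ∈ S, ξ' i ⁻¹' (sets i)) : Set Ω) =ᵐ[P] (⋂ i ∈ S, ξ i ⁻¹' (sets i)) := by
    refine Filter.eventuallyEq_set.mpr (hall.mono fun ω h => ?_)
    simp only [Set.mem_iInter, Set.mem_preimage]
    constructor
    · intro H i hi; rw [h i hi]; exact H i hi
    · intro H i hi; rw [← h i hi]; exact H i hi
  rw [measure_congr h2, hindep S hsets]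
  exact Finset.prod_congr rfl fun i _ => (measure_congr (h1 i)).symm

end Stmt7


open Stmt7 in
theorem stmt_7 {Ω : Type*} [MeasurableSpace Ω] (P : Measure Ω) [IsProbabilityMeasure P]
    (ξ : ℕ → Ω → ℝ)
    (hindep : iIndepFun ξ P)
    (hdist : ∀ i, Measure.map (ξ i) P = gaussianReal 0 1)
    (α : ℝ) (hα : 0 < α) (hα2 : α < 1 / 2) :
    (∀ x : ℝ, 0 < x →
      (P {ω | x < ⨆ k : ℕ+, (∑ i ∈ Finset.range (k : ℕ), ((ξ i ω) ^ 2 - 1) -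
          (-(α + Real.log (1 - 2 * α) / 2) / α) * (k : ℕ))}).toReal ≤
        Real.exp (-α * x)) ∧
    ∫ ω, ⨆ k : ℕ+, (∑ i ∈ Finset.range (k : ℕ), ((ξ i ω) ^ 2 - 1) -
        (-(α + Real.log (1 - 2 * α) / 2) / α) * (k : ℕ)) ∂P ≤ 1 / α := by
  classical
  have haem : ∀ i, AEMeasurable (ξ i) P := by
    intro i
    by_contra h
    have h0 : Measure.map (ξ i) P = 0 := Measure.map_of_not_aemeasurable h
    rw [hdist i] at h0
    exact (IsProbabilityMeasure.ne_zero (gaussianReal 0 1)) h0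
  set ξ' : ℕ → Ω → ℝ := fun i => (haem i).mk (ξ i) with hξ'
  have hmeas' : ∀ i, Measurable (ξ' i) := fun i => (haem i).measurable_mk
  have heq : ∀ i, ξ i =ᵐ[P] ξ' i := fun i => (haem i).ae_eq_mk
  have hindep' : iIndepFun ξ' P := iIndep_ae hindep heq
  have hdist' : ∀ i, Measure.map (ξ' i) P = gaussianReal 0 1 := fun i => by
    rw [← Measure.map_congr (heq i), hdist i]
  set c : ℝ := 1 + (-(α + Real.log (1 - 2 * α) / 2) / α) with hc
  have hcmul : α * c = -(Real.log (1 - 2 * α)) / 2 := by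
    rw [hc]
    field_simp
    ring
  obtain ⟨hgint, hgmom⟩ := gauss_int hα hα2 hcmul
  have haeall : ∀ᵐ ω ∂P, ∀ i, ξ i ω = ξ' i ω := ae_all_iff.mpr heq
  have hGG : ∀ᵐ ω ∂P, (⨆ k : ℕ+, S ξ α (k : ℕ) ω) = ⨆ k : ℕ+, S ξ' α (k : ℕ) ω := by
    refine haeall.mono fun ω h => ?_
    refine iSup_congr fun k => ?_
    unfold S
    congr 1
    exact Finset.sum_congr rfl fun i _ => by rw [h i]
  constructor
  · intro x hx
    show (P {ω | x < ⨆ k : ℕ+, S ξ α (k : ℕ) ω}).toReal ≤ Real.exp (-α * x)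
    have hsets : {ω | x < ⨆ k : ℕ+, S ξ α (k : ℕ) ω}
        =ᵐ[P] {ω | x < ⨆ k : ℕ+, S ξ' α (k : ℕ) ω} :=
      Filter.eventuallyEq_set.mpr (hGG.mono fun ω h => by
        simp only [Set.mem_setOf_eq, h])
    calc (P {ω | x < ⨆ k : ℕ+, S ξ α (k : ℕ) ω}).toReal
        = (P {ω | x < ⨆ k : ℕ+, S ξ' α (k : ℕ) ω}).toReal := by rw [measure_congr hsets]
      _ ≤ Real.exp (-α * x) := part1 hmeas' hindep' hdist' hgint hgmom hα hc x hx
  · show ∫ ω, (⨆ k : ℕ+, S ξ α (k : ℕ) ω) ∂P ≤ 1 / α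
    calc ∫ ω, (⨆ k : ℕ+, S ξ α (k : ℕ) ω) ∂P
        = ∫ ω, (⨆ k : ℕ+, S ξ' α (k : ℕ) ω) ∂P := integral_congr_ae hGG
      _ ≤ 1 / α := part2 hmeas' hindep' hdist' hgint hgmom hα hc
end

section
/- For ρ > 0, if eρ ≤ 1 then max_{Q ≥ 1} (2 + [log Q]₊ (1 + ρe))/Q = 2, and if eρ > 1 then max_{Q ≥ 1} (2 + [log Q]₊ (1 + ρe))/Q = (1 + ρe)·exp((1 − ρe)/(1 + ρe)). -/
theorem stmt_11 (ρ : ℝ) (hρ : 0 < ρ) :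
    (Real.exp 1 * ρ ≤ 1 →
      IsGreatest ((fun Q : ℝ => (2 + max (Real.log Q) 0 * (1 + ρ * Real.exp 1)) / Q) ''
        Set.Ici 1) 2) ∧
    (1 < Real.exp 1 * ρ →
      IsGreatest ((fun Q : ℝ => (2 + max (Real.log Q) 0 * (1 + ρ * Real.exp 1)) / Q) ''
        Set.Ici 1)
        ((1 + ρ * Real.exp 1) * Real.exp ((1 - ρ * Real.exp 1) / (1 + ρ * Real.exp 1)))) := by
  set a := 1 + ρ * Real.exp 1 with ha
  have he : 0 < Real.exp 1 := Real.exp_pos 1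
  have ha1 : 1 < a := by nlinarith
  have ha0 : 0 < a := by linarith
  constructor
  · intro h
    have ha2 : a ≤ 2 := by nlinarith
    constructor
    · exact ⟨1, by norm_num, by simp⟩
    · rintro x ⟨Q, hQ, rfl⟩
      simp only [Set.mem_Ici] at hQ
      have hQ0 : 0 < Q := lt_of_lt_of_le one_pos hQ
      have ht : 0 ≤ Real.log Q := Real.log_nonneg hQ
      simp only
      rw [max_eq_left ht, div_le_iff₀ hQ0]
      have h1 : Real.log Q + 1 ≤ Real.exp (Real.log Q) := Real.add_one_le_exp _
      rw [Real.exp_log hQ0] at h1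
      nlinarith [ht, h1]
  · intro h
    have ha2 : 2 < a := by nlinarith
    set t0 := (a - 2) / a with ht0def
    have ht0 : 0 < t0 := div_pos (by linarith) ha0
    have hneg : (1 - ρ * Real.exp 1) / a = -t0 := by
      rw [ht0def]; field_simp; ring
    have ht0a : t0 * a = a - 2 := by
      rw [ht0def]; field_simp
    constructor
    · refine ⟨Real.exp t0, Real.one_le_exp ht0.le, ?_⟩
      simp only
      rw [Real.log_exp, max_eq_left ht0.le, hneg, Real.exp_neg]
      rw [ht0a]
      have hexp0 : 0 < Real.exp t0 := Real.exp_pos _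
      field_simp
      ring
    · rintro x ⟨Q, hQ, rfl⟩
      simp only [Set.mem_Ici] at hQ
      have hQ0 : 0 < Q := lt_of_lt_of_le one_pos hQ
      have ht : 0 ≤ Real.log Q := Real.log_nonneg hQ
      simp only
      rw [max_eq_left ht, hneg, Real.exp_neg, div_le_iff₀ hQ0]
      set t := Real.log Q with htdef
      have hexp : Q = Real.exp t := (Real.exp_log hQ0).symm
      rw [hexp]
      have hexp0 : 0 < Real.exp t0 := Real.exp_pos _
      have h2 : Real.exp t = Real.exp t0 * Real.exp (t - t0) := by
        rw [← Real.exp_add]; ring_nf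
      rw [h2]
      have hsimp : a * (Real.exp t0)⁻¹ * (Real.exp t0 * Real.exp (t - t0))
          = a * Real.exp (t - t0) := by field_simp
      rw [hsimp]
      have key : 1 + (t - t0) ≤ Real.exp (t - t0) := by
        linarith [Real.add_one_le_exp (t - t0)]
      nlinarith [mul_le_mul_of_nonneg_left key ha0.le]
end

section
/- Let M be a finite set of positive integers, let r : M → ℝ, and define weights w_m = exp(−r(m)/(4σ²)) / Σ_{s∈M} exp(−r(s)/(4σ²)) for σ > 0. Then Σ_{m∈M} w_m (r(m) − min_{s∈M} r(s)) ≤ 4σ² Σ_{m∈M} w_m log(1/w_m), i.e., the weighted excess of r over its minimum is bounded by 4σ² times the entropy of the exponential weights. -/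
theorem stmt_16 (M : Finset ℕ) (hM : M.Nonempty) (hpos : ∀ m ∈ M, 0 < m)
    (r : ℕ → ℝ) (σ : ℝ) (hσ : 0 < σ)
    (w : ℕ → ℝ)
    (hw : ∀ m ∈ M, w m = Real.exp (-r m / (4 * σ ^ 2)) /
      ∑ s ∈ M, Real.exp (-r s / (4 * σ ^ 2))) :
    ∑ m ∈ M, w m * (r m - M.inf' hM r) ≤
      4 * σ ^ 2 * ∑ m ∈ M, w m * Real.log (1 / w m) := by
  set T : ℝ := 4 * σ ^ 2 with hT
  have hTpos : 0 < T := by positivity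
  set Z : ℝ := ∑ s ∈ M, Real.exp (-r s / T) with hZ
  have hZpos : 0 < Z := Finset.sum_pos (fun s _ => Real.exp_pos _) hM
  have hsum1 : ∑ m ∈ M, w m = 1 := by
    rw [Finset.sum_congr rfl (fun m hm => hw m hm), ← Finset.sum_div, ← hZ,
      div_self hZpos.ne']
  have hwlog : ∀ m ∈ M, Real.log (1 / w m) = r m / T + Real.log Z := by
    intro m hm
    rw [hw m hm, one_div, Real.log_inv, Real.log_div (Real.exp_pos _).ne'
      hZpos.ne', Real.log_exp]
    ring
  set c : ℝ := M.inf' hM r with hc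
  have hL : ∑ m ∈ M, w m * (r m - c) = (∑ m ∈ M, w m * r m) - c := by
    simp [mul_sub, Finset.sum_sub_distrib, ← Finset.sum_mul, hsum1]
  have hR : ∑ m ∈ M, w m * Real.log (1 / w m)
      = (∑ m ∈ M, w m * (r m / T)) + Real.log Z := by
    rw [Finset.sum_congr rfl (fun m hm => by rw [hwlog m hm])]
    simp [mul_add, Finset.sum_add_distrib, ← Finset.sum_mul, hsum1]
  obtain ⟨m0, hm0, hcm0⟩ := Finset.exists_mem_eq_inf' hM r
  have hZge : Real.exp (-c / T) ≤ Z := by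
    rw [hc, hcm0]
    exact Finset.single_le_sum (f := fun s => Real.exp (-r s / T))
      (fun s _ => (Real.exp_pos _).le) hm0
  have hlogZ : -c / T ≤ Real.log Z := by
    have := Real.log_le_log (Real.exp_pos _) hZge
    rwa [Real.log_exp] at this
  have hclog : -c ≤ T * Real.log Z := by
    have := (div_le_iff₀ hTpos).mp hlogZ
    linarith
  have hTdiv : ∑ m ∈ M, w m * (r m / T) = (∑ m ∈ M, w m * r m) / T := by
    rw [Finset.sum_div]
    exact Finset.sum_congr rfl (fun m hm => by ring)
  rw [hL, hR, hTdiv, mul_add, mul_div_cancel₀ _ hTpos.ne']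
  linarith
end
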